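/- There exists a constant C, depending only on ρ₀, such that for all integers m ≥ 0 and all 1 ≤ j ≤ ⌊m/2⌋, (m!/(j!(m−j)!)) · (m+1)^{1/2} · N_{ρ,m+1}/(N_{ρ,j+3}·H_{ρ,m−j+1,1}) ≤ C·(m−j+1)^{3/2}/(j+1). -/

import Mathlib

open MeasureTheory Real Filter

noncomputable section

namespace HypP

/-- Japanese bracket `⟨y⟩ = (1+y²)^{1/2}`. -/
def br (y : ℝ) : ℝ := Real.sqrt (1 + y ^ 2)

/-- Weighting a function of `(x,y)` by `⟨y⟩^e`. -/
def wt (e : ℝ) (g : ℝ → ℝ → ℝ) : ℝ → ℝ → ℝ := fun x y => br y ^ e * g x y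

/-- `m`-th tangential derivative `∂ₓ^m`. -/
def Dx (m : ℕ) (g : ℝ → ℝ → ℝ) : ℝ → ℝ → ℝ :=
  fun x y => iteratedDeriv m (fun x' => g x' y) x

/-- `k`-th normal derivative `∂_y^k`. -/
def Dy (k : ℕ) (g : ℝ → ℝ → ℝ) : ℝ → ℝ → ℝ :=
  fun x y => iteratedDeriv k (fun y' => g x y') y

/-- Squared `L²` norm on the half-plane `ℝ × (0,∞)`. -/
def sqL2 (g : ℝ → ℝ → ℝ) : ℝ := ∫ x : ℝ, ∫ y in Set.Ioi (0 : ℝ), (g x y) ^ 2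

/-- `L²` inner product on the half-plane. -/
def ipL2 (f g : ℝ → ℝ → ℝ) : ℝ := ∫ x : ℝ, ∫ y in Set.Ioi (0 : ℝ), f x y * g x y

/-- Squared `L²ₓL^∞_y` norm on the half-plane. -/
def sqL2xLinfy (g : ℝ → ℝ → ℝ) : ℝ :=
  ∫ x : ℝ, (sSup ((fun y => |g x y|) '' Set.Ioi (0 : ℝ))) ^ 2

/-- The weight `H_{ρ,m,k}`. -/
def Hc (ρ : ℝ) (m k : ℕ) : ℝ :=
  ρ ^ (m + k + 1) * ((m : ℝ) + (k : ℝ) + 1) ^ 9 /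
    (((m + k).factorial : ℝ) * Real.sqrt (m.factorial : ℝ))

/-- The weight `N_{ρ,m} = H_{ρ,m,0}`. -/
def Nc (ρ : ℝ) (m : ℕ) : ℝ := Hc ρ m 0

/-- The weight `L_{ρ,k} = H_{ρ,1,k}`. -/
def Lc (ρ : ℝ) (k : ℕ) : ℝ := Hc ρ 1 k

/-- Squared anisotropic Gevrey norm `‖h‖²_{G^{3/2,1}_{ρ,ℓ}}`. -/
def gevSq (ρ ℓ : ℝ) (h : ℝ → ℝ → ℝ) : ℝ :=
  (∑' m : ℕ, (Nc ρ m * Real.sqrt (sqL2 (wt (ℓ - 1) (Dx m h)))) ^ 2)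
  + ∑' m : ℕ, ∑' k : ℕ,
      (((m : ℝ) + 1) * Hc ρ (m + 1) k *
        Real.sqrt (sqL2 (wt ℓ (Dx m (Dy (k + 1) h))))) ^ 2

/-- Anisotropic Gevrey norm. -/
def gevNorm (ρ ℓ : ℝ) (h : ℝ → ℝ → ℝ) : ℝ := Real.sqrt (gevSq ρ ℓ h)

/-- Membership in the anisotropic Gevrey space `G^{3/2,1}_{ρ,ℓ}`. -/
def InGev (ρ ℓ : ℝ) (h : ℝ → ℝ → ℝ) : Prop :=
  Summable (fun m : ℕ => (Nc ρ m * Real.sqrt (sqL2 (wt (ℓ - 1) (Dx m h)))) ^ 2) ∧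
  Summable (fun p : ℕ × ℕ =>
    (((p.1 : ℝ) + 1) * Hc ρ (p.1 + 1) p.2 *
      Real.sqrt (sqL2 (wt ℓ (Dx p.1 (Dy (p.2 + 1) h))))) ^ 2)

/-- Time derivative `∂ₜ`. -/
def pt (u : ℝ → ℝ → ℝ → ℝ) : ℝ → ℝ → ℝ → ℝ := fun t x y => deriv (fun s => u s x y) t

/-- Tangential derivative `∂ₓ` (time-dependent functions). -/
def px (u : ℝ → ℝ → ℝ → ℝ) : ℝ → ℝ → ℝ → ℝ := fun t x y => deriv (fun x' => u t x' y) x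

/-- Normal derivative `∂_y` (time-dependent functions). -/
def py (u : ℝ → ℝ → ℝ → ℝ) : ℝ → ℝ → ℝ → ℝ := fun t x y => deriv (fun y' => u t x y') y

/-- The normal velocity `v(t,x,y) = -∫₀^y ∂ₓu(t,x,ỹ) dỹ`. -/
def vv (u : ℝ → ℝ → ℝ → ℝ) : ℝ → ℝ → ℝ → ℝ :=
  fun t x y => -∫ s in (0 : ℝ)..y, px u t x s

/-- The auxiliary function `φ = ∂ₜu + u∂ₓu + v∂_yu`. -/
def phi (u : ℝ → ℝ → ℝ → ℝ) : ℝ → ℝ → ℝ → ℝ :=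
  fun t x y => pt u t x y + u t x y * px u t x y + vv u t x y * py u t x y

/-- `u` solves the 2D hyperbolic Prandtl system on `[0,T]`, with the no-slip boundary
condition and decay of `u` at `y → ∞`. -/
def Solves (u : ℝ → ℝ → ℝ → ℝ) (T : ℝ) : Prop :=
  (∀ t ∈ Set.Icc (0 : ℝ) T, ∀ x : ℝ, ∀ y ∈ Set.Ioi (0 : ℝ),
      pt (pt u) t x y + pt u t x y
        + u t x y * px u t x y + vv u t x y * py u t x y
        + pt (fun t' x' y' => u t' x' y' * px u t' x' y' + vv u t' x' y' * py u t' x' y') t x y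
        - py (py u) t x y = 0)
  ∧ (∀ t ∈ Set.Icc (0 : ℝ) T, ∀ x : ℝ, u t x 0 = 0)
  ∧ (∀ t ∈ Set.Icc (0 : ℝ) T, ∀ x : ℝ, Tendsto (fun y => u t x y) atTop (nhds 0))

/-- `U` is the auxiliary function `𝒰` solving
`(∂ₜ + u∂ₓ + v∂_y)∫₀^y 𝒰 dỹ = -∂ₓv`, `𝒰|_{t=0} = 0`. -/
def AuxU (u U : ℝ → ℝ → ℝ → ℝ) (T : ℝ) : Prop :=
  (∀ t ∈ Set.Icc (0 : ℝ) T, ∀ x : ℝ, ∀ y ∈ Set.Ioi (0 : ℝ),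
      pt (fun t' x' y' => ∫ s in (0 : ℝ)..y', U t' x' s) t x y
        + u t x y * px (fun t' x' y' => ∫ s in (0 : ℝ)..y', U t' x' s) t x y
        + vv u t x y * py (fun t' x' y' => ∫ s in (0 : ℝ)..y', U t' x' s) t x y
        = -px (vv u) t x y)
  ∧ (∀ x : ℝ, ∀ y : ℝ, U 0 x y = 0)

/-- The auxiliary function `λ = ∂ₓu - (∂_yu)∫₀^y 𝒰 dỹ`. -/
def lam (u U : ℝ → ℝ → ℝ → ℝ) : ℝ → ℝ → ℝ → ℝ :=
  fun t x y => px u t x y - py u t x y * ∫ s in (0 : ℝ)..y, U t x s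

/-- `|a|²_{X_ρ}` for a time slice `a = (us, Us, ls, fs)` of `(u, 𝒰, λ, φ)`. -/
def Xsq (ρ ℓ : ℝ) (us Us ls fs : ℝ → ℝ → ℝ) : ℝ :=
  (∑' m : ℕ, (Nc ρ (m + 1)) ^ 2 * sqL2 (Dx m Us))
  + (∑' m : ℕ, ((m : ℝ) + 1) * (Nc ρ (m + 1)) ^ 2 * sqL2 (wt (ℓ - 1) (Dx m ls)))
  + ∑' m : ℕ, ∑' k : ℕ, ((m : ℝ) + 1) ^ 2 * (Hc ρ (m + 1) k) ^ 2 *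
      (sqL2 (wt ℓ (Dx m (Dy k fs))) + sqL2 (wt ℓ (Dx m (Dy (k + 1) us))))

/-- `|a|²_{Y_ρ}` for a time slice `a = (us, Us, ls, fs)` of `(u, 𝒰, λ, φ)`. -/
def Ysq (ρ ℓ : ℝ) (us Us ls fs : ℝ → ℝ → ℝ) : ℝ :=
  (∑' m : ℕ, ((m : ℝ) + 1) * (Nc ρ (m + 1)) ^ 2 * sqL2 (Dx m Us))
  + (∑' m : ℕ, ((m : ℝ) + 1) ^ 2 * (Nc ρ (m + 1)) ^ 2 * sqL2 (wt (ℓ - 1) (Dx m ls)))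
  + ∑' m : ℕ, ∑' k : ℕ, ((m : ℝ) + (k : ℝ) + 1) * ((m : ℝ) + 1) ^ 2 * (Hc ρ (m + 1) k) ^ 2 *
      (sqL2 (wt ℓ (Dx m (Dy k fs))) + sqL2 (wt ℓ (Dx m (Dy (k + 1) us))))

/-- `|a|_{X_ρ}`. -/
def Xnorm (ρ ℓ : ℝ) (us Us ls fs : ℝ → ℝ → ℝ) : ℝ := Real.sqrt (Xsq ρ ℓ us Us ls fs)

/-- `|a|_{Y_ρ}`. -/
def Ynorm (ρ ℓ : ℝ) (us Us ls fs : ℝ → ℝ → ℝ) : ℝ := Real.sqrt (Ysq ρ ℓ us Us ls fs)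

end HypP

open HypP

private lemma fact_aux' (b : ℕ) : ∀ a, 1 ≤ a → a ≤ b →
    (b+1).factorial * (b+2)^(a-1) ≤ (a+b).factorial := by
  intro a ha
  induction a, ha using Nat.le_induction with
  | base => intro _; rw [show 1+b = b+1 from by omega]; simp [Nat.factorial]
  | succ a ha ih =>
    intro hab
    have h2 := ih (by omega)
    have : (b+1).factorial * (b+2)^(a+1-1) = ((b+1).factorial * (b+2)^(a-1)) * (b+2) := by
      rw [mul_assoc, ← pow_succ]; congr 2; omega
    rw [this]
    calc ((b+1).factorial * (b+2)^(a-1)) * (b+2) ≤ (a+b).factorial * (b+2) :=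
          Nat.mul_le_mul_right _ h2
      _ ≤ (a+b).factorial * (a+b+1) := Nat.mul_le_mul_left _ (by omega)
      _ = (a+1+b).factorial := by
          rw [mul_comm, show a+1+b = (a+b)+1 from by omega, Nat.factorial_succ]

private lemma fact_A' (a b : ℕ) (ha : 1 ≤ a) (hab : a ≤ b) :
    (a+3).factorial * (b+1).factorial ≤ (a+4)^4 * (a+b).factorial := by
  have h1 : a.factorial ≤ (a+4) * (b+2)^(a-1) := by
    calc a.factorial ≤ a ^ a := Nat.factorial_le_pow a
      _ = a * a ^ (a-1) := by rw [← pow_succ']; congr 1; omega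
      _ ≤ (a+4) * (b+2)^(a-1) :=
          Nat.mul_le_mul (by omega) (Nat.pow_le_pow_left (by omega) _)
  have h2 : (a+3).factorial = (a+3)*((a+2)*((a+1)*a.factorial)) := by
    simp [Nat.factorial_succ]
  calc (a+3).factorial * (b+1).factorial
      = (a+3)*((a+2)*((a+1)*a.factorial)) * (b+1).factorial := by rw [h2]
    _ ≤ (a+3)*((a+2)*((a+1)*((a+4) * (b+2)^(a-1)))) * (b+1).factorial := by gcongr
    _ = ((a+3)*(a+2)*(a+1)*(a+4)) * ((b+1).factorial * (b+2)^(a-1)) := by ring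
    _ ≤ (a+4)^4 * (a+b).factorial := by
        apply Nat.mul_le_mul
        · have : (a+4)^4 = (a+4)*(a+4)*(a+4)*(a+4) := by ring
          rw [this]; gcongr <;> omega
        · exact fact_aux' b a ha hab

private lemma key_est (ρ₀ ρ : ℝ) (hρ₀ : 0 < ρ₀) (h1 : (Real.exp 1)⁻¹ * ρ₀ ≤ ρ) (h2 : ρ ≤ ρ₀)
    (a b : ℕ) (ha : 1 ≤ a) (hab : a ≤ b) :
    ((a+b).factorial : ℝ) / ((a.factorial : ℝ) * (b.factorial : ℝ))
      * Real.sqrt ((a:ℝ) + (b:ℝ) + 1)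
      * (Nc ρ (a + b + 1) / (Nc ρ (a + 3) * Hc ρ (b + 1) 1))
    ≤ (Real.exp 1 ^ 5 * 2 ^ 9 / ρ₀ ^ 5) * (((b:ℝ) + 1) ^ ((3:ℝ)/2) / ((a:ℝ) + 1)) := by
  have hρ : 0 < ρ := lt_of_lt_of_le (by positivity) h1
  have hA : (1:ℝ) ≤ (a:ℝ) := by exact_mod_cast ha
  have hAB : (a:ℝ) ≤ (b:ℝ) := by exact_mod_cast hab
  have hB : (1:ℝ) ≤ (b:ℝ) := le_trans hA hAB
  have hfa : (0:ℝ) < (a.factorial:ℝ) := by exact_mod_cast Nat.factorial_pos a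
  have hfb : (0:ℝ) < (b.factorial:ℝ) := by exact_mod_cast Nat.factorial_pos b
  have hf0 : (0:ℝ) < ((a+b).factorial:ℝ) := by exact_mod_cast Nat.factorial_pos (a+b)
  have hf1 : (0:ℝ) < ((a+b+1).factorial:ℝ) := by exact_mod_cast Nat.factorial_pos (a+b+1)
  have hf2 : (0:ℝ) < ((a+3).factorial:ℝ) := by exact_mod_cast Nat.factorial_pos (a+3)
  have hfb1 : (0:ℝ) < ((b+1).factorial:ℝ) := by exact_mod_cast Nat.factorial_pos (b+1)
  have hs1 : (0:ℝ) < Real.sqrt ((a+b+1).factorial:ℝ) := Real.sqrt_pos.mpr hf1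
  have hs2 : (0:ℝ) < Real.sqrt ((a+3).factorial:ℝ) := Real.sqrt_pos.mpr hf2
  have hsb1 : (0:ℝ) < Real.sqrt ((b+1).factorial:ℝ) := Real.sqrt_pos.mpr hfb1
  -- factorial expansions
  have f1 : ((a+b+1).factorial : ℝ) = ((a:ℝ)+(b:ℝ)+1) * ((a+b).factorial:ℝ) := by
    rw [show a+b+1 = (a+b)+1 from rfl, Nat.factorial_succ]; push_cast; ring
  have f2 : ((a+3).factorial : ℝ) = ((a:ℝ)+3)*((a:ℝ)+2)*((a:ℝ)+1) * (a.factorial:ℝ) := by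
    rw [show a+3 = (a+2)+1 from rfl, Nat.factorial_succ,
        show a+2 = (a+1)+1 from rfl, Nat.factorial_succ,
        Nat.factorial_succ]
    push_cast; ring
  have f3 : ((b+1+1).factorial : ℝ) = ((b:ℝ)+2)*((b:ℝ)+1) * (b.factorial:ℝ) := by
    rw [Nat.factorial_succ, Nat.factorial_succ]; push_cast; ring
  -- the product form
  have heq : ((a+b).factorial : ℝ) / ((a.factorial : ℝ) * (b.factorial : ℝ))
      * Real.sqrt ((a:ℝ) + (b:ℝ) + 1)
      * (Nc ρ (a + b + 1) / (Nc ρ (a + 3) * Hc ρ (b + 1) 1))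
      = (1/ρ^5) * ((((a:ℝ)+(b:ℝ)+2)^9) / ((((a:ℝ)+4)^9) * (((b:ℝ)+3)^9)))
        * (((a:ℝ)+1)*((a:ℝ)+2)*((a:ℝ)+3)*((b:ℝ)+1)*((b:ℝ)+2)/((a:ℝ)+(b:ℝ)+1))
        * (Real.sqrt ((a:ℝ)+(b:ℝ)+1) * Real.sqrt ((a+3).factorial:ℝ)
            * Real.sqrt ((b+1).factorial:ℝ) / Real.sqrt ((a+b+1).factorial:ℝ)) := by
    simp only [Nc, Hc, Nat.add_zero, Nat.cast_zero, add_zero]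
    push_cast
    rw [show (a:ℝ)+(b:ℝ)+1+1 = (a:ℝ)+(b:ℝ)+2 from by ring,
        show (a:ℝ)+3+1 = (a:ℝ)+4 from by ring,
        show (b:ℝ)+1+1+1 = (b:ℝ)+3 from by ring,
        show a+b+1+1 = a+(b+2) from by omega,
        show a+3+1 = a+(4:ℕ) from by omega,
        show b+1+1+1 = b+(3:ℕ) from by omega]
    have hXne : (0:ℝ) < ((a:ℝ)+(b:ℝ)+2)^9 := by positivity
    have hYne : (0:ℝ) < ((a:ℝ)+4)^9 := by positivity
    have hZne : (0:ℝ) < ((b:ℝ)+3)^9 := by positivity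
    generalize hX : ((a:ℝ)+(b:ℝ)+2)^9 = X
    rw [hX] at hXne
    generalize hY : ((a:ℝ)+4)^9 = Y
    rw [hY] at hYne
    generalize hZ : ((b:ℝ)+3)^9 = Z
    rw [hZ] at hZne
    rw [f1, f2, f3]
    simp only [pow_add]
    field_simp
  rw [heq]
  -- sqrt bound
  have hsq : Real.sqrt ((a:ℝ)+(b:ℝ)+1) * Real.sqrt ((a+3).factorial:ℝ)
      * Real.sqrt ((b+1).factorial:ℝ) / Real.sqrt ((a+b+1).factorial:ℝ)
      ≤ ((a:ℝ)+4)^2 := by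
    rw [div_le_iff₀ hs1]
    have e1 : Real.sqrt ((a:ℝ)+(b:ℝ)+1) * Real.sqrt ((a+3).factorial:ℝ)
        * Real.sqrt ((b+1).factorial:ℝ)
        = Real.sqrt (((a:ℝ)+(b:ℝ)+1) * ((a+3).factorial:ℝ) * ((b+1).factorial:ℝ)) := by
      rw [Real.sqrt_mul (by positivity), Real.sqrt_mul (by positivity)]
    have e2 : ((a:ℝ)+4)^2 * Real.sqrt ((a+b+1).factorial:ℝ)
        = Real.sqrt ((((a:ℝ)+4)^4) * ((a+b+1).factorial:ℝ)) := by
      rw [Real.sqrt_mul (by positivity), show (((a:ℝ)+4)^4) = (((a:ℝ)+4)^2)^2 from by ring,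
          Real.sqrt_sq (by positivity)]
    rw [e1, e2]
    apply Real.sqrt_le_sqrt
    have hc : ((a+3).factorial:ℝ)*((b+1).factorial:ℝ) ≤ ((a:ℝ)+4)^4 * ((a+b).factorial:ℝ) := by
      have := fact_A' a b ha hab
      calc ((a+3).factorial:ℝ)*((b+1).factorial:ℝ)
          = (((a+3).factorial * (b+1).factorial : ℕ) : ℝ) := by push_cast; ring
        _ ≤ (((a+4)^4 * (a+b).factorial : ℕ) : ℝ) := by exact_mod_cast this
        _ = ((a:ℝ)+4)^4 * ((a+b).factorial:ℝ) := by push_cast; ring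
    calc ((a:ℝ)+(b:ℝ)+1) * ((a+3).factorial:ℝ) * ((b+1).factorial:ℝ)
        = ((a:ℝ)+(b:ℝ)+1) * (((a+3).factorial:ℝ) * ((b+1).factorial:ℝ)) := by ring
      _ ≤ ((a:ℝ)+(b:ℝ)+1) * (((a:ℝ)+4)^4 * ((a+b).factorial:ℝ)) := by
          apply mul_le_mul_of_nonneg_left hc (by positivity)
      _ = (((a:ℝ)+4)^4) * ((a+b+1).factorial:ℝ) := by rw [f1]; ring
  -- rho bound
  have hrho : 1/ρ^5 ≤ Real.exp 1 ^ 5 / ρ₀^5 := by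
    rw [div_le_div_iff₀ (by positivity) (by positivity)]
    have h0 : ρ₀ ≤ Real.exp 1 * ρ := by
      have he : (0:ℝ) < Real.exp 1 := Real.exp_pos 1
      calc ρ₀ = Real.exp 1 * ((Real.exp 1)⁻¹ * ρ₀) := by field_simp
        _ ≤ Real.exp 1 * ρ := by
            apply mul_le_mul_of_nonneg_left h1 he.le
    calc 1 * ρ₀^5 = ρ₀^5 := by ring
      _ ≤ (Real.exp 1 * ρ)^5 := pow_le_pow_left₀ hρ₀.le h0 5
      _ = Real.exp 1 ^5 * ρ^5 := by ring
  -- core algebraic bound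
  have h9 : (((a:ℝ)+(b:ℝ)+2)^9) ≤ 2^9 * (((b:ℝ)+3)^9) := by
    calc (((a:ℝ)+(b:ℝ)+2)^9) ≤ (2*((b:ℝ)+3))^9 := by
          apply pow_le_pow_left₀ (by positivity)
          linarith
      _ = 2^9 * (((b:ℝ)+3)^9) := by ring
  have hA9 : ((a:ℝ)+1)*((a:ℝ)+1)*((a:ℝ)+2)*((a:ℝ)+3)*(((a:ℝ)+4)^2) ≤ ((a:ℝ)+4)^9 := by
    have h4 : (1:ℝ) ≤ (a:ℝ)+4 := by linarith
    calc ((a:ℝ)+1)*((a:ℝ)+1)*((a:ℝ)+2)*((a:ℝ)+3)*(((a:ℝ)+4)^2)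
        ≤ ((a:ℝ)+4)*((a:ℝ)+4)*((a:ℝ)+4)*((a:ℝ)+4)*(((a:ℝ)+4)^2) := by gcongr <;> linarith
      _ = ((a:ℝ)+4)^6 := by ring
      _ ≤ ((a:ℝ)+4)^9 := pow_le_pow_right₀ h4 (by norm_num)
  have hb32 : (b:ℝ)+1 ≤ ((b:ℝ)+1) ^ ((3:ℝ)/2) := by
    have h1B : (1:ℝ) ≤ (b:ℝ)+1 := by linarith
    calc (b:ℝ)+1 = ((b:ℝ)+1)^(1:ℝ) := (Real.rpow_one _).symm
      _ ≤ ((b:ℝ)+1) ^ ((3:ℝ)/2) := Real.rpow_le_rpow_of_exponent_le h1B (by norm_num)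
  have core : (((a:ℝ)+(b:ℝ)+2)^9) / ((((a:ℝ)+4)^9) * (((b:ℝ)+3)^9))
      * (((a:ℝ)+1)*((a:ℝ)+2)*((a:ℝ)+3)*((b:ℝ)+1)*((b:ℝ)+2)/((a:ℝ)+(b:ℝ)+1))
      * (((a:ℝ)+4)^2)
      ≤ 2^9 * (((b:ℝ)+1) ^ ((3:ℝ)/2) / ((a:ℝ)+1)) := by
    have hXpos : (0:ℝ) < ((a:ℝ)+(b:ℝ)+2)^9 := by positivity
    have hYpos : (0:ℝ) < ((a:ℝ)+4)^9 := by positivity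
    have hZpos : (0:ℝ) < ((b:ℝ)+3)^9 := by positivity
    have hWpos : (0:ℝ) < ((b:ℝ)+1) ^ ((3:ℝ)/2) := by positivity
    generalize hX : ((a:ℝ)+(b:ℝ)+2)^9 = X
    rw [hX] at hXpos h9
    generalize hY : ((a:ℝ)+4)^9 = Y
    rw [hY] at hYpos hA9
    generalize hZ : ((b:ℝ)+3)^9 = Z
    rw [hZ] at hZpos h9
    generalize hW : ((b:ℝ)+1) ^ ((3:ℝ)/2) = W
    rw [hW] at hWpos hb32
    rw [div_mul_div_comm, div_mul_eq_mul_div, mul_div_assoc',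
        div_le_div_iff₀ (by positivity) (by positivity)]
    calc X * (((a:ℝ)+1)*((a:ℝ)+2)*((a:ℝ)+3)*((b:ℝ)+1)*((b:ℝ)+2)) * (((a:ℝ)+4)^2)
          * ((a:ℝ)+1)
        = X * ((b:ℝ)+2)
            * (((a:ℝ)+1)*((a:ℝ)+1)*((a:ℝ)+2)*((a:ℝ)+3)*(((a:ℝ)+4)^2)) * ((b:ℝ)+1) := by
          ring
      _ ≤ (2^9*Z) * ((a:ℝ)+(b:ℝ)+1) * Y * W := by
          have m1 : X * ((b:ℝ)+2) ≤ (2^9*Z) * ((a:ℝ)+(b:ℝ)+1) :=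
            mul_le_mul h9 (by linarith) (by positivity)
              (mul_nonneg (by norm_num) hZpos.le)
          have m2 : X * ((b:ℝ)+2)
                * (((a:ℝ)+1)*((a:ℝ)+1)*((a:ℝ)+2)*((a:ℝ)+3)*(((a:ℝ)+4)^2))
              ≤ (2^9*Z) * ((a:ℝ)+(b:ℝ)+1) * Y :=
            mul_le_mul m1 hA9 (by positivity)
              (mul_nonneg (mul_nonneg (by norm_num) hZpos.le) (by positivity))
          exact mul_le_mul m2 hb32 (by positivity)
            (mul_nonneg (mul_nonneg (mul_nonneg (by norm_num) hZpos.le) (by positivity)) hYpos.le)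
      _ = 2 ^ 9 * W * (Y * Z * ((a:ℝ)+(b:ℝ)+1)) := by ring
  -- assemble
  have hS0 : (0:ℝ) ≤ Real.sqrt ((a:ℝ)+(b:ℝ)+1) * Real.sqrt ((a+3).factorial:ℝ)
      * Real.sqrt ((b+1).factorial:ℝ) / Real.sqrt ((a+b+1).factorial:ℝ) := by positivity
  calc (1/ρ^5) * ((((a:ℝ)+(b:ℝ)+2)^9) / ((((a:ℝ)+4)^9) * (((b:ℝ)+3)^9)))
        * (((a:ℝ)+1)*((a:ℝ)+2)*((a:ℝ)+3)*((b:ℝ)+1)*((b:ℝ)+2)/((a:ℝ)+(b:ℝ)+1))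
        * (Real.sqrt ((a:ℝ)+(b:ℝ)+1) * Real.sqrt ((a+3).factorial:ℝ)
            * Real.sqrt ((b+1).factorial:ℝ) / Real.sqrt ((a+b+1).factorial:ℝ))
      ≤ (Real.exp 1 ^ 5 / ρ₀^5) * ((((a:ℝ)+(b:ℝ)+2)^9) / ((((a:ℝ)+4)^9) * (((b:ℝ)+3)^9)))
        * (((a:ℝ)+1)*((a:ℝ)+2)*((a:ℝ)+3)*((b:ℝ)+1)*((b:ℝ)+2)/((a:ℝ)+(b:ℝ)+1))
        * (((a:ℝ)+4)^2) := by
        gcongr <;> positivity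
    _ = (Real.exp 1 ^ 5 / ρ₀^5) * (((((a:ℝ)+(b:ℝ)+2)^9) / ((((a:ℝ)+4)^9) * (((b:ℝ)+3)^9)))
        * (((a:ℝ)+1)*((a:ℝ)+2)*((a:ℝ)+3)*((b:ℝ)+1)*((b:ℝ)+2)/((a:ℝ)+(b:ℝ)+1))
        * (((a:ℝ)+4)^2)) := by ring
    _ ≤ (Real.exp 1 ^ 5 / ρ₀^5) * (2^9 * (((b:ℝ)+1) ^ ((3:ℝ)/2) / ((a:ℝ)+1))) := by
        apply mul_le_mul_of_nonneg_left core (by positivity)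
    _ = (Real.exp 1 ^ 5 * 2 ^ 9 / ρ₀ ^ 5) * (((b:ℝ) + 1) ^ ((3:ℝ)/2) / ((a:ℝ) + 1)) := by ring


/-- estimate (4.17): for `1 ≤ j ≤ ⌊m/2⌋`,
`(m!/(j!(m−j)!)) (m+1)^{1/2} N_{ρ,m+1}/(N_{ρ,j+3}H_{ρ,m−j+1,1}) ≤ C(m−j+1)^{3/2}/(j+1)`. -/
theorem weight_estimate_fe6 (ρ₀ : ℝ) (hρ₀ : 0 < ρ₀) :
    ∃ C : ℝ, 0 < C ∧
      ∀ ρ : ℝ, (Real.exp 1)⁻¹ * ρ₀ ≤ ρ → ρ ≤ ρ₀ →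
        ∀ m j : ℕ, 1 ≤ j → j ≤ m / 2 →
          (m.factorial : ℝ) / ((j.factorial : ℝ) * ((m - j).factorial : ℝ))
              * Real.sqrt ((m : ℝ) + 1)
              * (Nc ρ (m + 1) / (Nc ρ (j + 3) * Hc ρ (m - j + 1) 1))
            ≤ C * ((m : ℝ) - (j : ℝ) + 1) ^ ((3 : ℝ) / 2) / ((j : ℝ) + 1) := by
  refine ⟨Real.exp 1 ^ 5 * 2 ^ 9 / ρ₀ ^ 5, by positivity, ?_⟩
  intro ρ hρ1 hρ2 m j hj1 hj2
  have h2j : 2 * j ≤ m := by omega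
  obtain ⟨b, rfl⟩ : ∃ b, m = j + b := ⟨m - j, by omega⟩
  have hb : j ≤ b := by omega
  have hsub : j + b - j = b := by omega
  rw [hsub]
  have hkey := key_est ρ₀ ρ hρ₀ hρ1 hρ2 j b hj1 hb
  have e1 : ((j + b : ℕ) : ℝ) + 1 = (j:ℝ) + (b:ℝ) + 1 := by push_cast; ring
  have e2 : ((j + b : ℕ) : ℝ) - (j:ℝ) + 1 = (b:ℝ) + 1 := by push_cast; ring
  rw [e1, e2, mul_div_assoc]
  exact hkey
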